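/- Let 𝔛 ⊆ 2^{[n]}, X ⊆ [n] with |X| ≥ 2, and i_α ∈ X. If e_{X∖i_ℓ} ∈ ℑ(𝔛) for every i_ℓ ∈ X∖{i_α}, then e_{X∖i_α} ∈ ℑ(𝔛). -/

import Mathlib

open ExteriorAlgebra

/-- The Grassmann algebra over `K` on generators `e 0, ..., e (n-1)`. -/
abbrev Grass (K : Type) [Field K] (n : ℕ) := ExteriorAlgebra K (Fin n → K)

/-- The generator `e i`. -/
noncomputable def gen (K : Type) [Field K] (n : ℕ) (i : Fin n) : Grass K n :=
  ExteriorAlgebra.ι K (Pi.single i 1)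

/-- The monomial associated to a list of indices. -/
noncomputable def monList (K : Type) [Field K] (n : ℕ) (l : List (Fin n)) : Grass K n :=
  (l.map (gen K n)).prod

/-- The monomial `e_X` of a subset `X ⊆ [n]`, factors in increasing order. -/
noncomputable def mon (K : Type) [Field K] (n : ℕ) (X : Finset (Fin n)) : Grass K n :=
  monList K n (X.sort (· ≤ ·))

/-- The degree `-1` antiderivation `∂` on the Grassmann algebra with `∂ (e i) = 1`
(left contraction with the covector sending each generator to `1`). -/
noncomputable def bd (K : Type) [Field K] (n : ℕ) : Grass K n →ₗ[K] Grass K n :=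
  CliffordAlgebra.contractLeft (∑ i : Fin n, LinearMap.proj i)

/-- The two-sided ideal `ℑ(𝔛)` generated by the differentials `∂ e_Y`, `Y ∈ 𝔛`. -/
noncomputable def OSIdeal (K : Type) [Field K] (n : ℕ) (X : Set (Finset (Fin n))) :
    TwoSidedIdeal (Grass K n) :=
  TwoSidedIdeal.span ((fun Y => bd K n (mon K n Y)) '' X)

variable (K : Type) [Field K] (n : ℕ)

lemma d_single (j : Fin n) :
    (∑ i : Fin n, LinearMap.proj (R := K) (φ := fun _ : Fin n => K) i) (Pi.single j 1) = 1 := by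
  simp [Finset.sum_pi_single]

lemma bd_gen (j : Fin n) : bd K n (gen K n j) = 1 := by
  rw [bd, gen]
  show CliffordAlgebra.contractLeft _ (CliffordAlgebra.ι (0 : QuadraticForm K (Fin n → K)) _) = 1
  rw [CliffordAlgebra.contractLeft_ι, d_single, map_one]

lemma bd_gen_mul (j : Fin n) (x : Grass K n) :
    bd K n (gen K n j * x) = x - gen K n j * bd K n x := by
  rw [bd, gen]
  show CliffordAlgebra.contractLeft _ (CliffordAlgebra.ι (0 : QuadraticForm K (Fin n → K)) _ * x) = _
  rw [CliffordAlgebra.contractLeft_ι_mul, d_single, one_smul]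

lemma involute_gen (j : Fin n) :
    CliffordAlgebra.involute (gen K n j) = - gen K n j :=
  CliffordAlgebra.involute_ι _

lemma bd_mul (x y : Grass K n) :
    bd K n (x * y) = bd K n x * y + CliffordAlgebra.involute x * bd K n y := by
  induction x using CliffordAlgebra.induction generalizing y with
  | algebraMap r =>
    rw [bd, CliffordAlgebra.contractLeft_algebraMap_mul, CliffordAlgebra.contractLeft_algebraMap,
      zero_mul, CliffordAlgebra.involute.commutes, zero_add]
  | ι v =>
    rw [show (CliffordAlgebra.ι (0 : QuadraticForm K (Fin n → K)) v : Grass K n)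
        = ExteriorAlgebra.ι K v from rfl]
    rw [bd]
    erw [CliffordAlgebra.contractLeft_ι_mul, CliffordAlgebra.contractLeft_ι,
      CliffordAlgebra.involute_ι]
    rw [Algebra.smul_def, neg_mul, sub_eq_add_neg]
  | mul x₁ x₂ h1 h2 =>
    have hx2 := h1 x₂
    rw [mul_assoc, h1 (x₂ * y), h2 y, hx2, map_mul]
    noncomm_ring
  | add x₁ x₂ h1 h2 =>
    rw [add_mul, map_add, map_add, map_add, h1, h2]
    noncomm_ring

lemma bd_involute (x : Grass K n) :
    bd K n (CliffordAlgebra.involute x) = - CliffordAlgebra.involute (bd K n x) := by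
  induction x using CliffordAlgebra.induction with
  | algebraMap r =>
    rw [CliffordAlgebra.involute.commutes, bd, CliffordAlgebra.contractLeft_algebraMap,
      map_zero, neg_zero]
  | ι v =>
    rw [CliffordAlgebra.involute_ι, map_neg, bd, CliffordAlgebra.contractLeft_ι,
      CliffordAlgebra.involute.commutes]
  | mul x₁ x₂ h1 h2 =>
    rw [map_mul, bd_mul, bd_mul, h1, h2, map_add, map_mul, map_mul,
      CliffordAlgebra.involute_involute]
    noncomm_ring
  | add x₁ x₂ h1 h2 =>
    rw [map_add, map_add, map_add, h1, h2, map_add, neg_add]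

lemma monList_cons (a : Fin n) (l : List (Fin n)) :
    monList K n (a :: l) = gen K n a * monList K n l := by
  simp [monList]

lemma involute_monList (l : List (Fin n)) :
    CliffordAlgebra.involute (monList K n l) = ((-1 : K) ^ l.length) • monList K n l := by
  induction l with
  | nil => simp [monList]
  | cons a l ih =>
    rw [monList_cons, map_mul, involute_gen, ih, List.length_cons, pow_succ,
      mul_neg_one, neg_smul, neg_mul, mul_smul_comm]

lemma gen_anticomm (a b : Fin n) : gen K n a * gen K n b = -(gen K n b * gen K n a) := by
  have := ExteriorAlgebra.ι_add_mul_swap (R := K) (M := Fin n → K) (Pi.single a (1:K)) (Pi.single b 1)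
  exact eq_neg_of_add_eq_zero_left this

lemma gen_mul_monList (j : Fin n) (l : List (Fin n)) :
    gen K n j * monList K n l = ((-1 : K) ^ l.length) • (monList K n l * gen K n j) := by
  induction l with
  | nil => simp [monList]
  | cons a l ih =>
    rw [monList_cons, ← mul_assoc, gen_anticomm K n j a, neg_mul, mul_assoc, ih,
      mul_smul_comm, List.length_cons, pow_succ, mul_neg_one, neg_smul,
      mul_assoc]

lemma bd_monList (l : List (Fin n)) :
    bd K n (monList K n l) =
      ∑ k ∈ Finset.range l.length, ((-1 : K) ^ k) • monList K n (l.eraseIdx k) := by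
  induction l with
  | nil =>
    simp only [monList, List.map_nil, List.prod_nil, List.length_nil, Finset.range_zero,
      Finset.sum_empty]
    rw [show (1 : Grass K n) = algebraMap K _ 1 from (map_one _).symm, bd,
      CliffordAlgebra.contractLeft_algebraMap]
  | cons a l ih =>
    rw [monList_cons, bd_gen_mul, ih, List.length_cons, Finset.sum_range_succ']
    simp only [List.eraseIdx_cons_succ, List.eraseIdx_cons_zero, pow_succ, pow_zero, one_smul,
      monList_cons]
    rw [Finset.mul_sum, sub_eq_add_neg, add_comm, ← Finset.sum_neg_distrib]
    congr 1
    refine Finset.sum_congr rfl fun k _ => ?_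
    rw [mul_smul_comm, mul_comm ((-1:K)^k) (-1), mul_smul, neg_one_smul]

lemma sort_erase (X : Finset (Fin n)) (j : Fin n) :
    (X.erase j).sort (· ≤ ·) = (X.sort (· ≤ ·)).erase j := by
  refine List.Perm.eq_of_pairwise' (Finset.pairwise_sort _ _)
    (((Finset.pairwise_sort X (· ≤ ·)).sublist List.erase_sublist)) ?_
  rw [← Multiset.coe_eq_coe, Finset.sort_eq, ← Multiset.coe_erase, Finset.sort_eq,
    ← Finset.erase_val]

lemma smul_mem_tsi (I : TwoSidedIdeal (Grass K n)) (c : K) {x : Grass K n} (hx : x ∈ I) :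
    c • x ∈ I := by
  rw [Algebra.smul_def]; exact I.mul_mem_left _ _ hx

lemma bd_bd (x : Grass K n) : bd K n (bd K n x) = 0 :=
  CliffordAlgebra.contractLeft_contractLeft _ _

lemma osideal_stable (Xs : Set (Finset (Fin n))) :
    ∀ x ∈ OSIdeal K n Xs,
      bd K n x ∈ OSIdeal K n Xs ∧ CliffordAlgebra.involute x ∈ OSIdeal K n Xs := by
  set I := OSIdeal K n Xs with hI
  let J : TwoSidedIdeal (Grass K n) := TwoSidedIdeal.mk'
    {x | x ∈ I ∧ bd K n x ∈ I ∧ CliffordAlgebra.involute x ∈ I}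
    ⟨I.zero_mem, by rw [map_zero]; exact ⟨I.zero_mem, by rw [map_zero]; exact I.zero_mem⟩⟩
    (fun hx hy => ⟨I.add_mem hx.1 hy.1,
      by rw [map_add]; exact I.add_mem hx.2.1 hy.2.1,
      by rw [map_add]; exact I.add_mem hx.2.2 hy.2.2⟩)
    (fun hx => ⟨I.neg_mem hx.1,
      by rw [map_neg]; exact I.neg_mem hx.2.1,
      by rw [map_neg]; exact I.neg_mem hx.2.2⟩)
    (fun {x y} hy => ⟨I.mul_mem_left _ _ hy.1,
      by rw [bd_mul]
         exact I.add_mem (I.mul_mem_left _ _ hy.1) (I.mul_mem_left _ _ hy.2.1),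
      by rw [map_mul]; exact I.mul_mem_left _ _ hy.2.2⟩)
    (fun {x y} hx => ⟨I.mul_mem_right _ _ hx.1,
      by rw [bd_mul]
         exact I.add_mem (I.mul_mem_right _ _ hx.2.1) (I.mul_mem_right _ _ hx.2.2),
      by rw [map_mul]; exact I.mul_mem_right _ _ hx.2.2⟩)
  intro x hx
  have hsub : ((fun Y => bd K n (mon K n Y)) '' Xs) ⊆ J := by
    rintro g ⟨Y, hY, rfl⟩
    rw [SetLike.mem_coe, TwoSidedIdeal.mem_mk']
    have hg : bd K n (mon K n Y) ∈ I := TwoSidedIdeal.subset_span ⟨Y, hY, rfl⟩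
    refine ⟨hg, by rw [bd_bd]; exact I.zero_mem, ?_⟩
    have : CliffordAlgebra.involute (bd K n (mon K n Y))
        = - bd K n (CliffordAlgebra.involute (mon K n Y)) := by
      rw [bd_involute, neg_neg]
    rw [this, mon, involute_monList, map_smul]
    exact I.neg_mem (smul_mem_tsi K n I _ hg)
  have hxJ : x ∈ J := TwoSidedIdeal.mem_span_iff.mp hx J hsub
  rw [TwoSidedIdeal.mem_mk'] at hxJ
  exact ⟨hxJ.2.1, hxJ.2.2⟩

lemma mon_mem_of_erase (Xs : Set (Finset (Fin n))) (X : Finset (Fin n)) (j : Fin n)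
    (hj : j ∈ X) (h : mon K n (X.erase j) ∈ OSIdeal K n Xs) :
    mon K n X ∈ OSIdeal K n Xs := by
  obtain ⟨t, s, hts⟩ := List.append_of_mem (Finset.mem_sort (· ≤ ·) |>.2 hj)
  have hnd : (X.sort (· ≤ ·)).Nodup := Finset.sort_nodup _ _
  have hjt : j ∉ t := by
    rw [hts, List.nodup_append] at hnd
    exact fun hmem => hnd.2.2 j hmem j List.mem_cons_self rfl
  have herase : (X.sort (· ≤ ·)).erase j = t ++ s := by
    rw [hts, List.erase_append_right _ hjt, List.erase_cons_head]
  have hmonX : mon K n X = monList K n t * (gen K n j * monList K n s) := by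
    rw [mon, hts, monList, List.map_append, List.prod_append, List.map_cons, List.prod_cons]
    rfl
  have hsplit : monList K n (t ++ s) = monList K n t * monList K n s := by
    simp [monList]
  have key : mon K n X = ((-1 : K) ^ t.length) • (gen K n j * mon K n (X.erase j)) := by
    rw [hmonX, mon, sort_erase, herase, hsplit, ← mul_assoc, ← mul_assoc, gen_mul_monList,
      smul_mul_assoc, smul_smul, ← pow_add, Even.neg_one_pow ⟨t.length, rfl⟩, one_smul]
  rw [key]
  exact smul_mem_tsi K n _ _ ((OSIdeal K n Xs).mul_mem_left _ _ h)

/-- if `e_{X \ j} ∈ ℑ(𝔛)` for every `j ∈ X \ {i}`, then `e_{X \ i} ∈ ℑ(𝔛)`. -/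
theorem stmt3 (K : Type) [Field K] (n : ℕ) (Xs : Set (Finset (Fin n)))
    (X : Finset (Fin n)) (hX : 2 ≤ X.card) (i : Fin n) (hi : i ∈ X)
    (h : ∀ j ∈ X \ {i}, mon K n (X \ {j}) ∈ OSIdeal K n Xs) :
    mon K n (X \ {i}) ∈ OSIdeal K n Xs := by
  classical
  have herase : ∀ j : Fin n, X \ {j} = X.erase j := fun j => (Finset.erase_eq X j).symm
  have h' : ∀ j ∈ X, j ≠ i → mon K n (X.erase j) ∈ OSIdeal K n Xs := by
    intro j hjX hji
    rw [← herase]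
    exact h j (Finset.mem_sdiff.2 ⟨hjX, by simpa using hji⟩)
  obtain ⟨j, hjX, hji⟩ := Finset.exists_mem_ne (s := X) (by omega) i
  have hXmem : mon K n X ∈ OSIdeal K n Xs :=
    mon_mem_of_erase K n Xs X j hjX (h' j hjX hji)
  have hbd : bd K n (mon K n X) ∈ OSIdeal K n Xs := (osideal_stable K n Xs _ hXmem).1
  set l := X.sort (· ≤ ·) with hl
  have hnd : l.Nodup := Finset.sort_nodup _ _
  have hil : i ∈ l := (Finset.mem_sort _).2 hi
  set k0 := l.idxOf i with hk0
  have hk0lt : k0 < l.length := List.idxOf_lt_length_iff.2 hil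
  rw [mon, ← hl, bd_monList] at hbd
  rw [← Finset.add_sum_erase _ _ (Finset.mem_range.2 hk0lt)] at hbd
  have hrest : ∑ k ∈ (Finset.range l.length).erase k0,
      ((-1 : K) ^ k) • monList K n (l.eraseIdx k) ∈ OSIdeal K n Xs := by
    refine Finset.sum_induction _ _ (fun a b ha hb => (OSIdeal K n Xs).add_mem ha hb)
      (OSIdeal K n Xs).zero_mem ?_
    intro k hk
    obtain ⟨hkne, hkr⟩ := Finset.mem_erase.mp hk
    have hklt : k < l.length := Finset.mem_range.mp hkr
    set j' := l[k] with hj'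
    have hidx : l.idxOf j' = k := hnd.idxOf_getElem k hklt
    have hj'X : j' ∈ X := (Finset.mem_sort _).1 (l.getElem_mem hklt)
    have hj'i : j' ≠ i := by
      intro hcon
      apply hkne
      rw [← hidx, hcon, ← hk0]
    have her : l.eraseIdx k = l.erase j' := by
      rw [List.erase_eq_eraseIdx_of_idxOf hidx]
    have hm : monList K n (l.eraseIdx k) = mon K n (X.erase j') := by
      rw [her, mon, sort_erase, ← hl]
    rw [hm]
    exact smul_mem_tsi K n _ _ (h' j' hj'X hj'i)
  have hterm : ((-1 : K) ^ k0) • monList K n (l.eraseIdx k0) ∈ OSIdeal K n Xs := by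
    have := (OSIdeal K n Xs).sub_mem hbd hrest
    simpa using this
  have hfin : monList K n (l.eraseIdx k0) ∈ OSIdeal K n Xs := by
    have := smul_mem_tsi K n _ ((-1 : K) ^ k0) hterm
    rwa [smul_smul, ← pow_add, Even.neg_one_pow ⟨k0, rfl⟩, one_smul] at this
  have : mon K n (X \ {i}) = monList K n (l.eraseIdx k0) := by
    rw [herase, mon, sort_erase, ← hl, List.erase_eq_eraseIdx_of_idxOf hk0.symm]
  rwa [this]
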